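/- Comparison of inclusion and independent-particle Dirichlet forms: for every ε ∈ (0,1), every k ∈ ℕ, every weight ω : Ω_ε → (0,∞) and every f : Ω_ε^k → ℝ, one has E_{ω,⊗}^{ε,k}(f) ≤ E_ω^{ε,k}(f). -/

import Mathlib

open scoped Classical MeasureTheory
open Filter MeasureTheory Set

noncomputable section

/-- A bounded Lipschitz domain in `ℝ^d` containing locally, near every boundary point and
up to an isometry of `ℝ^d`, the open region strictly above the graph of a Lipschitz function. -/
def IsLipschitzDomain (d : ℕ) (Ω : Set (EuclideanSpace ℝ (Fin d))) : Prop :=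
  IsOpen Ω ∧ IsConnected Ω ∧ Bornology.IsBounded Ω ∧
    ∀ p ∈ frontier Ω, ∃ U ∈ nhds p,
      ∃ (φ : EuclideanSpace ℝ (Fin d) ≃ᵢ EuclideanSpace ℝ (Fin d)) (j : Fin d)
        (L : NNReal) (g : (Fin d → ℝ) → ℝ),
        LipschitzWith L g ∧
          ∀ x ∈ U, (x ∈ Ω ↔ g (fun i => if i = j then 0 else φ x i) < φ x j)

/-- The points of the rescaled lattice `εℤ^d`. -/
def latticePts (d : ℕ) (ε : ℝ) : Set (EuclideanSpace ℝ (Fin d)) :=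
  {x | ∀ i, ∃ n : ℤ, x i = n * ε}

/-- The union of all closed segments joining nearest-neighbour points of `εℤ^d`. -/
def gridSet (d : ℕ) (ε : ℝ) : Set (EuclideanSpace ℝ (Fin d)) :=
  ⋃ x ∈ latticePts d ε, ⋃ y ∈ latticePts d ε, ⋃ (_ : dist x y = ε), segment ℝ x y

/-- The discrete domain `Ω_ε`. -/
def discDomain {d : ℕ} (Ω : Set (EuclideanSpace ℝ (Fin d))) (ε : ℝ) :
    Set (EuclideanSpace ℝ (Fin d)) :=
  connectedComponentIn (Ω ∩ gridSet d ε) 0 ∩ latticePts d ε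

/-- The discrete inner boundary `∂Ω_ε`. -/
def innerBdry {d : ℕ} (Ω : Set (EuclideanSpace ℝ (Fin d))) (ε : ℝ) :
    Set (EuclideanSpace ℝ (Fin d)) :=
  {x ∈ discDomain Ω ε | ({y ∈ discDomain Ω ε | dist x y = ε}).ncard < 2 * d}

variable {d : ℕ}

/-- The set `Ω_ε^k` of `k`-tuples of points of `Ω_ε`. -/
def tupleSet (Ω : Set (EuclideanSpace ℝ (Fin d))) (ε : ℝ) (k : ℕ) :
    Set (Fin k → EuclideanSpace ℝ (Fin d)) :=
  {x | ∀ i, x i ∈ discDomain Ω ε}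

/-- The weight `ω[x] = ∏_i (ω(x_i) + #{j < i : x_j = x_i})`. -/
def wWeight (ω : EuclideanSpace ℝ (Fin d) → ℝ) (k : ℕ)
    (x : Fin k → EuclideanSpace ℝ (Fin d)) : ℝ :=
  ∏ i : Fin k, (ω (x i) + ((Finset.univ.filter fun j => j < i ∧ x j = x i).card : ℝ))

/-- The inclusion generator `A_ω^{ε,k}` with reference weight `ω`. -/
def inclGen (Ω : Set (EuclideanSpace ℝ (Fin d))) (ε : ℝ)
    (ω : EuclideanSpace ℝ (Fin d) → ℝ) (k : ℕ)
    (f : (Fin k → EuclideanSpace ℝ (Fin d)) → ℝ)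
    (x : Fin k → EuclideanSpace ℝ (Fin d)) : ℝ :=
  ε ^ (-2 : ℝ) * ∑ i : Fin k,
    ∑ᶠ y ∈ {y ∈ discDomain Ω ε | dist (x i) y = ε},
      (ω y + ((Finset.univ.filter fun j => j ≠ i ∧ x j = y).card : ℝ)) *
        (f (Function.update x i y) - f x)

/-- The independent-particle generator `A_{ω,⊗}^{ε,k}` with reference weight `ω`. -/
def indepGen (Ω : Set (EuclideanSpace ℝ (Fin d))) (ε : ℝ)
    (ω : EuclideanSpace ℝ (Fin d) → ℝ) (k : ℕ)
    (f : (Fin k → EuclideanSpace ℝ (Fin d)) → ℝ)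
    (x : Fin k → EuclideanSpace ℝ (Fin d)) : ℝ :=
  ε ^ (-2 : ℝ) * ∑ i : Fin k,
    ∑ᶠ y ∈ {y ∈ discDomain Ω ε | dist (x i) y = ε},
      ω y * (f (Function.update x i y) - f x)

/-- The inclusion Dirichlet form `E_ω^{ε,k}`. -/
def inclForm (Ω : Set (EuclideanSpace ℝ (Fin d))) (ε : ℝ)
    (ω : EuclideanSpace ℝ (Fin d) → ℝ) (k : ℕ)
    (f : (Fin k → EuclideanSpace ℝ (Fin d)) → ℝ) : ℝ :=
  ε ^ (k * d) * ∑ᶠ x ∈ tupleSet Ω ε k, wWeight ω k x * f x * (- inclGen Ω ε ω k f x)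

/-- The independent-particle Dirichlet form `E_{ω,⊗}^{ε,k}`. -/
def indepForm (Ω : Set (EuclideanSpace ℝ (Fin d))) (ε : ℝ)
    (ω : EuclideanSpace ℝ (Fin d) → ℝ) (k : ℕ)
    (f : (Fin k → EuclideanSpace ℝ (Fin d)) → ℝ) : ℝ :=
  ε ^ (k * d) * ∑ᶠ x ∈ tupleSet Ω ε k,
    (∏ i : Fin k, ω (x i)) * f x * (- indepGen Ω ε ω k f x)


section AuxLemmas

open Finset

private lemma aux_prod_filter_lt_card {β : Type*} {M : Type*} [LinearOrder β] [CommMonoid M]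
    (g : ℕ → M) :
    ∀ (n : ℕ) (F : Finset β), F.card = n →
      (∏ i ∈ F, g ((F.filter (· < i)).card)) = ∏ r ∈ Finset.range n, g r := by
  intro n
  induction n with
  | zero => intro F hF; simp [Finset.card_eq_zero.mp hF]
  | succ n ih =>
    intro F hF
    have hne : F.Nonempty := Finset.card_pos.mp (by omega)
    set m := F.max' hne with hm
    have hmF : m ∈ F := F.max'_mem hne
    have herase : F.filter (· < m) = F.erase m := by
      ext j
      simp only [Finset.mem_filter, Finset.mem_erase]
      constructor
      · rintro ⟨hj, hlt⟩; exact ⟨ne_of_lt hlt, hj⟩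
      · rintro ⟨hne', hj⟩; exact ⟨hj, lt_of_le_of_ne (F.le_max' j hj) hne'⟩
    have hcard : (F.erase m).card = n := by
      rw [Finset.card_erase_of_mem hmF, hF]; rfl
    rw [← Finset.mul_prod_erase F _ hmF, herase, hcard]
    have hinner : ∀ i ∈ F.erase m,
        (F.filter (· < i)).card = ((F.erase m).filter (· < i)).card := by
      intro i hi
      congr 1
      ext j
      simp only [Finset.mem_filter, Finset.mem_erase]
      constructor
      · rintro ⟨hj, hlt⟩
        have him : i ≤ m := F.le_max' i (Finset.mem_of_mem_erase hi)
        exact ⟨⟨fun h => absurd hlt (by rw [h]; exact not_lt.mpr him), hj⟩, hlt⟩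
      · rintro ⟨⟨_, hj⟩, hlt⟩; exact ⟨hj, hlt⟩
    rw [Finset.prod_congr rfl (fun i hi => by rw [hinner i hi]),
      ih (F.erase m) hcard, Finset.prod_range_succ]
    exact mul_comm _ _

private noncomputable def pcnt {α : Type*} {k : ℕ} (x : Fin k → α) (v : α) : ℕ :=
  (Finset.univ.filter fun j => x j = v).card

private lemma aux_wW_eq_prod {α : Type*} {k : ℕ} (ω : α → ℝ) (x : Fin k → α)
    (T : Finset α) (hT : ∀ j, x j ∈ T) :
    (∏ i : Fin k, (ω (x i) + ((Finset.univ.filter fun j => j < i ∧ x j = x i).card : ℝ)))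
      = ∏ v ∈ T, ∏ r ∈ Finset.range (pcnt x v), (ω v + r) := by
  rw [← Finset.prod_fiberwise_of_maps_to (g := x) (t := T) (fun j _ => hT j)]
  refine Finset.prod_congr rfl fun v _ => ?_
  have h1 : ∀ i ∈ Finset.univ.filter (fun j => x j = v),
      (ω (x i) + ((Finset.univ.filter fun j => j < i ∧ x j = x i).card : ℝ))
        = (fun c : ℕ => (ω v + (c : ℝ)))
            (((Finset.univ.filter fun j => x j = v).filter (· < i)).card) := by
    intro i hi
    have hxi : x i = v := (Finset.mem_filter.mp hi).2
    simp only [hxi]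
    have hfe : (Finset.univ.filter fun j => j < i ∧ x j = v)
        = ((Finset.univ.filter fun j => x j = v).filter (· < i)) := by
      ext j
      simp only [Finset.mem_filter, Finset.mem_univ, true_and]
      tauto
    rw [hfe]
  rw [Finset.prod_congr rfl h1,
    aux_prod_filter_lt_card (fun c : ℕ => (ω v + (c : ℝ))) (pcnt x v) _ rfl]

private lemma aux_detailed_balance {α : Type*} {k : ℕ} (ω : α → ℝ)
    (x : Fin k → α) (i : Fin k) (v : α) :
    (∏ l : Fin k, (ω (Function.update x i v l) +
        ((Finset.univ.filter fun j => j < l ∧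
          Function.update x i v j = Function.update x i v l).card : ℝ)))
      * (ω (x i) + ((Finset.univ.filter fun j => j ≠ i ∧ x j = x i).card : ℝ))
    = (∏ l : Fin k, (ω (x l) +
        ((Finset.univ.filter fun j => j < l ∧ x j = x l).card : ℝ)))
      * (ω v + ((Finset.univ.filter fun j => j ≠ i ∧ x j = v).card : ℝ)) := by
  by_cases hv : v = x i
  · subst hv; rw [Function.update_eq_self]
  set a := x i with ha
  set x' := Function.update x i v with hx'
  set T : Finset α := insert v (Finset.univ.image x) with hTdef
  have haT : a ∈ T := Finset.mem_insert_of_mem (Finset.mem_image_of_mem x (Finset.mem_univ i))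
  have hvT : v ∈ T := Finset.mem_insert_self _ _
  have hxT : ∀ j, x j ∈ T := fun j =>
    Finset.mem_insert_of_mem (Finset.mem_image_of_mem x (Finset.mem_univ j))
  have hx'T : ∀ j, x' j ∈ T := by
    intro j
    by_cases hj : j = i
    · subst hj; simp [hx', hvT]
    · rw [hx', Function.update_of_ne hj]; exact hxT j
  rw [aux_wW_eq_prod ω x T hxT, aux_wW_eq_prod ω x' T hx'T]
  have hx'i : x' i = v := Function.update_self i v x
  have hx'j : ∀ j, j ≠ i → x' j = x j := fun j hj => Function.update_of_ne hj v x
  set na := pcnt x' a with hna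
  set nv := pcnt x v with hnv
  have hca : pcnt x a = na + 1 := by
    rw [hna]
    unfold pcnt
    rw [show (Finset.univ.filter fun j => x j = a)
        = insert i (Finset.univ.filter fun j => x' j = a) by
      ext j
      simp only [Finset.mem_insert, Finset.mem_filter, Finset.mem_univ, true_and]
      by_cases hj : j = i
      · subst hj; simp [ha]
      · rw [hx'j j hj]; tauto]
    rw [Finset.card_insert_of_notMem (by simp [hx'i, hv, Ne.symm hv])]
  have hcv : pcnt x' v = nv + 1 := by
    rw [hnv]
    unfold pcnt
    rw [show (Finset.univ.filter fun j => x' j = v)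
        = insert i (Finset.univ.filter fun j => x j = v) by
      ext j
      simp only [Finset.mem_insert, Finset.mem_filter, Finset.mem_univ, true_and]
      by_cases hj : j = i
      · subst hj; simp [hx'i]
      · rw [hx'j j hj]; tauto]
    rw [Finset.card_insert_of_notMem (by simp [← ha, hv, Ne.symm hv])]
  have hma : ((Finset.univ.filter fun j => j ≠ i ∧ x j = a).card : ℝ) = (na : ℝ) := by
    congr 1
    rw [hna]; unfold pcnt
    congr 1
    ext j
    simp only [Finset.mem_filter, Finset.mem_univ, true_and]
    by_cases hj : j = i
    · subst hj; simp [hx'i, hv, ← ha]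
    · rw [hx'j j hj]; tauto
  have hmv : ((Finset.univ.filter fun j => j ≠ i ∧ x j = v).card : ℝ) = (nv : ℝ) := by
    congr 1
    rw [hnv]; unfold pcnt
    congr 1
    ext j
    simp only [Finset.mem_filter, Finset.mem_univ, true_and]
    by_cases hj : j = i
    · subst hj; simp [← ha, Ne.symm hv]
    · tauto
  have hother : ∀ w ∈ (T.erase v).erase a, pcnt x' w = pcnt x w := by
    intro w hw
    have hwa : w ≠ a := (Finset.mem_erase.mp hw).1
    have hwv : w ≠ v := (Finset.mem_erase.mp (Finset.mem_erase.mp hw).2).1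
    unfold pcnt
    congr 1
    ext j
    simp only [Finset.mem_filter, Finset.mem_univ, true_and]
    by_cases hj : j = i
    · subst hj; rw [hx'i, ← ha]; exact ⟨fun h => absurd h.symm hwv, fun h => absurd h.symm hwa⟩
    · rw [hx'j j hj]
  have haT' : a ∈ T.erase v := Finset.mem_erase.mpr ⟨Ne.symm hv, haT⟩
  have hL : (∏ w ∈ T, ∏ r ∈ Finset.range (pcnt x' w), (ω w + (r:ℝ)))
      = (∏ r ∈ Finset.range (pcnt x' v), (ω v + (r:ℝ)))
        * ((∏ r ∈ Finset.range (pcnt x' a), (ω a + (r:ℝ)))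
          * ∏ w ∈ (T.erase v).erase a, ∏ r ∈ Finset.range (pcnt x' w), (ω w + (r:ℝ))) := by
    rw [← Finset.mul_prod_erase T _ hvT, ← Finset.mul_prod_erase (T.erase v) _ haT']
  have hR : (∏ w ∈ T, ∏ r ∈ Finset.range (pcnt x w), (ω w + (r:ℝ)))
      = (∏ r ∈ Finset.range (pcnt x v), (ω v + (r:ℝ)))
        * ((∏ r ∈ Finset.range (pcnt x a), (ω a + (r:ℝ)))
          * ∏ w ∈ (T.erase v).erase a, ∏ r ∈ Finset.range (pcnt x w), (ω w + (r:ℝ))) := by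
    rw [← Finset.mul_prod_erase T _ hvT, ← Finset.mul_prod_erase (T.erase v) _ haT']
  have hE : (∏ w ∈ (T.erase v).erase a, ∏ r ∈ Finset.range (pcnt x' w), (ω w + (r:ℝ)))
      = ∏ w ∈ (T.erase v).erase a, ∏ r ∈ Finset.range (pcnt x w), (ω w + (r:ℝ)) :=
    Finset.prod_congr rfl (fun w hw => by rw [hother w hw])
  rw [hL, hR, hE, hca, hcv, Finset.prod_range_succ, Finset.prod_range_succ, hma, hmv]
  ring

private lemma aux_sum_symmetrize {γ : Type*} (A : Finset γ) (σ : γ → γ)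
    (hmem : ∀ a ∈ A, σ a ∈ A) (hinv : ∀ a ∈ A, σ (σ a) = a)
    (w h : γ → ℝ) (g : γ → ℝ)
    (hw : ∀ a ∈ A, w (σ a) = w a) (hh : ∀ a ∈ A, h (σ a) = h a + g a) :
    ∑ a ∈ A, w a * h a * g a = -(1/2) * ∑ a ∈ A, w a * g a ^ 2 := by
  have hg : ∀ a ∈ A, g (σ a) = - g a := by
    intro a ha
    have h1 := hh (σ a) (hmem a ha)
    rw [hinv a ha, hh a ha] at h1
    linarith
  have key : ∑ a ∈ A, (w a * h a * g a + (1/2) * w a * g a ^ 2) = 0 := by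
    refine Finset.sum_involution (fun a _ => σ a) ?_ ?_
      (fun a ha => hmem a ha) (fun a ha => hinv a ha)
    · intro a ha
      rw [hw a ha, hh a ha, hg a ha]
      ring
    · intro a ha hne hfix
      apply hne
      have hga : g a = 0 := by
        have h0 := hh a ha
        rw [hfix] at h0; linarith
      rw [hga]; ring
  have hsplit := Finset.sum_add_distrib (s := A) (f := fun a => w a * h a * g a)
      (g := fun a => (1/2) * w a * g a ^ 2)
  rw [hsplit] at key
  have h2 : ∑ a ∈ A, (1/2) * w a * g a ^ 2 = (1/2) * ∑ a ∈ A, w a * g a ^ 2 := by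
    rw [Finset.mul_sum]; exact Finset.sum_congr rfl fun a _ => by ring
  rw [h2] at key
  linarith

private lemma aux_lattice_ball_finite (d : ℕ) {ε : ℝ} (hε : 0 < ε) (R : ℝ) :
    (latticePts d ε ∩ Metric.closedBall 0 R :
      Set (EuclideanSpace ℝ (Fin d))).Finite := by
  set N : ℤ := ⌈R / ε⌉ with hN
  set C : Set ℝ := (fun m : ℤ => (m : ℝ) * ε) '' (Set.Icc (-N) N) with hC
  have hCfin : C.Finite := (Set.finite_Icc (-N) N).image _
  have hpifin : (WithLp.toLp 2 '' (Set.univ.pi fun _ : Fin d => C) :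
      Set (EuclideanSpace ℝ (Fin d))).Finite :=
    (Set.Finite.pi fun _ => hCfin).image _
  refine Set.Finite.subset hpifin ?_
  intro x hx
  refine ⟨WithLp.ofLp x, ?_, WithLp.toLp_ofLp (p := 2) x⟩
  have hlat : ∀ i, ∃ n : ℤ, x i = n * ε := hx.1
  have hball : @dist (EuclideanSpace ℝ (Fin d)) _ x 0 ≤ R := Metric.mem_closedBall.mp hx.2
  intro i _
  obtain ⟨n, hn⟩ := hlat i
  have habs : |x i| ≤ @dist (EuclideanSpace ℝ (Fin d)) _ x 0 := by
    rw [EuclideanSpace.dist_eq]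
    calc |x i| = Real.sqrt (dist (x i) ((0 : EuclideanSpace ℝ (Fin d)) i) ^ 2) := by
          simp [Real.dist_eq, Real.sqrt_sq_eq_abs]
      _ ≤ Real.sqrt (∑ j, dist (x j) ((0 : EuclideanSpace ℝ (Fin d)) j) ^ 2) :=
          Real.sqrt_le_sqrt (Finset.single_le_sum
            (f := fun j => dist (x j) ((0 : EuclideanSpace ℝ (Fin d)) j) ^ 2)
            (fun j _ => sq_nonneg _) (Finset.mem_univ i))
  have hxR : |x i| ≤ R := habs.trans hball
  have hnabs : |(n : ℝ)| * ε ≤ R := by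
    rw [← abs_of_pos hε, ← abs_mul, ← hn]; exact hxR
  have hdiv : |(n : ℝ)| ≤ R / ε := (le_div_iff₀ hε).mpr hnabs
  have h1 : (n : ℝ) ≤ (N : ℝ) :=
    le_trans (le_trans (le_abs_self _) hdiv) (Int.le_ceil _)
  have h2 : (-N : ℝ) ≤ (n : ℝ) := by
    have h3 : -(R / ε) ≤ (n : ℝ) := le_trans (neg_le_neg hdiv) (neg_abs_le (n : ℝ))
    have h4 : (-N : ℝ) ≤ -(R / ε) := by
      have h5 := Int.le_ceil (R / ε); push_cast; linarith
    exact le_trans h4 h3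
  exact ⟨n, ⟨by exact_mod_cast h2, by exact_mod_cast h1⟩, hn.symm⟩

end AuxLemmas

/-- Comparison of the inclusion and independent-particle
Dirichlet forms: `E_{ω,⊗}^{ε,k}(f) ≤ E_ω^{ε,k}(f)`. -/
theorem inclusion_dirichlet_form_comparison
    (d : ℕ) (hd : 2 ≤ d) (Ω : Set (EuclideanSpace ℝ (Fin d)))
    (hΩ : IsLipschitzDomain d Ω) (h0 : (0 : EuclideanSpace ℝ (Fin d)) ∈ Ω) :
    ∀ ε ∈ Set.Ioo (0:ℝ) 1, ∀ k : ℕ, 1 ≤ k →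
      ∀ ω : EuclideanSpace ℝ (Fin d) → ℝ, (∀ x ∈ discDomain Ω ε, 0 < ω x) →
        ∀ f : (Fin k → EuclideanSpace ℝ (Fin d)) → ℝ,
          indepForm Ω ε ω k f ≤ inclForm Ω ε ω k f := by
  intro ε hεIoo k hk ω hω f
  obtain ⟨hε0, hε1⟩ := hεIoo
  obtain ⟨R, hR⟩ := hΩ.2.2.1.subset_closedBall 0
  have hDfin : (discDomain Ω ε).Finite := by
    refine (aux_lattice_ball_finite d hε0 R).subset ?_
    rintro x ⟨hx1, hx2⟩
    exact ⟨hx2, hR ((connectedComponentIn_subset _ _) hx1).1⟩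
  have hSfin : (tupleSet Ω ε k).Finite := by
    refine Set.Finite.subset (Set.Finite.pi (fun _ : Fin k => hDfin)) ?_
    intro x hx i _
    exact hx i
  have hset : ∀ z : EuclideanSpace ℝ (Fin d),
      {y ∈ discDomain Ω ε | dist z y = ε}
        = ↑(hDfin.toFinset.filter (fun y => dist z y = ε)) := by
    intro z
    ext y
    simp [Set.Finite.mem_toFinset]
  -- the key symmetrization identity
  have main : ∀ W : (Fin k → EuclideanSpace ℝ (Fin d)) → Fin k → EuclideanSpace ℝ (Fin d) → ℝ,
      (∀ (x : Fin k → EuclideanSpace ℝ (Fin d)) (i : Fin k) (y : EuclideanSpace ℝ (Fin d)),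
        x ∈ tupleSet Ω ε k → y ∈ discDomain Ω ε → dist (x i) y = ε →
          W (Function.update x i y) i (x i) = W x i y) →
      ∑ x ∈ hSfin.toFinset, ∑ i : Fin k,
          ∑ y ∈ hDfin.toFinset.filter (fun y => dist (x i) y = ε),
            W x i y * f x * (f (Function.update x i y) - f x)
        = -(1/2) * ∑ x ∈ hSfin.toFinset, ∑ i : Fin k,
            ∑ y ∈ hDfin.toFinset.filter (fun y => dist (x i) y = ε),
              W x i y * (f (Function.update x i y) - f x) ^ 2 := by
    intro W hWsym
    set AF : Finset ((Fin k → EuclideanSpace ℝ (Fin d)) × (Fin k × EuclideanSpace ℝ (Fin d))) :=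
      (hSfin.toFinset ×ˢ (Finset.univ ×ˢ hDfin.toFinset)).filter
        (fun p => dist (p.1 p.2.1) p.2.2 = ε) with hAF
    have h3 : ∀ G : ((Fin k → EuclideanSpace ℝ (Fin d)) × (Fin k × EuclideanSpace ℝ (Fin d))) → ℝ,
        ∑ p ∈ AF, G p
          = ∑ x ∈ hSfin.toFinset, ∑ i : Fin k,
              ∑ y ∈ hDfin.toFinset.filter (fun y => dist (x i) y = ε), G (x, i, y) := by
      intro G
      rw [hAF, Finset.sum_filter, Finset.sum_product]
      refine Finset.sum_congr rfl fun x _ => ?_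
      rw [Finset.sum_product]
      refine Finset.sum_congr rfl fun i _ => ?_
      rw [Finset.sum_filter]
    have hmemAF : ∀ p ∈ AF,
        p.1 ∈ tupleSet Ω ε k ∧ p.2.2 ∈ discDomain Ω ε ∧ dist (p.1 p.2.1) p.2.2 = ε := by
      intro p hp
      rw [hAF, Finset.mem_filter, Finset.mem_product] at hp
      obtain ⟨⟨h1, h2⟩, h4⟩ := hp
      rw [Finset.mem_product] at h2
      exact ⟨hSfin.mem_toFinset.mp h1, hDfin.mem_toFinset.mp h2.2, h4⟩
    have hmem : ∀ p ∈ AF,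
        (Function.update p.1 p.2.1 p.2.2, (p.2.1, p.1 p.2.1)) ∈ AF := by
      intro p hp
      obtain ⟨hx, hy, hd⟩ := hmemAF p hp
      rw [hAF, Finset.mem_filter, Finset.mem_product]
      refine ⟨⟨?_, ?_⟩, ?_⟩
      · rw [hSfin.mem_toFinset]
        intro j
        show Function.update p.1 p.2.1 p.2.2 j ∈ discDomain Ω ε
        by_cases hj : j = p.2.1
        · subst hj; rw [Function.update_self]; exact hy
        · rw [Function.update_of_ne hj]; exact hx j
      · rw [Finset.mem_product]
        exact ⟨Finset.mem_univ _, hDfin.mem_toFinset.mpr (hx p.2.1)⟩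
      · show dist (Function.update p.1 p.2.1 p.2.2 p.2.1) (p.1 p.2.1) = ε
        rw [Function.update_self, dist_comm]
        exact hd
    have hinv : ∀ p ∈ AF,
        (fun q : (Fin k → EuclideanSpace ℝ (Fin d)) × (Fin k × EuclideanSpace ℝ (Fin d)) =>
          (Function.update q.1 q.2.1 q.2.2, (q.2.1, q.1 q.2.1)))
        ((fun q : (Fin k → EuclideanSpace ℝ (Fin d)) × (Fin k × EuclideanSpace ℝ (Fin d)) =>
          (Function.update q.1 q.2.1 q.2.2, (q.2.1, q.1 q.2.1))) p) = p := by
      rintro ⟨x, i, y⟩ _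
      show (Function.update (Function.update x i y) i (x i),
        (i, Function.update x i y i)) = (x, i, y)
      rw [Function.update_idem, Function.update_eq_self, Function.update_self]
    have e4 := aux_sum_symmetrize AF
      (fun q => (Function.update q.1 q.2.1 q.2.2, (q.2.1, q.1 q.2.1)))
      hmem hinv
      (fun p => W p.1 p.2.1 p.2.2) (fun p => f p.1)
      (fun p => f (Function.update p.1 p.2.1 p.2.2) - f p.1)
      (by
        rintro ⟨x, i, y⟩ hp
        obtain ⟨hx, hy, hd⟩ := hmemAF _ hp
        show W (Function.update x i y) i (x i) = W x i y
        exact hWsym x i y hx hy hd)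
      (by
        rintro ⟨x, i, y⟩ _
        show f (Function.update x i y) = f x + (f (Function.update x i y) - f x)
        ring)
    calc ∑ x ∈ hSfin.toFinset, ∑ i : Fin k,
          ∑ y ∈ hDfin.toFinset.filter (fun y => dist (x i) y = ε),
            W x i y * f x * (f (Function.update x i y) - f x)
        = ∑ p ∈ AF, W p.1 p.2.1 p.2.2 * f p.1
            * (f (Function.update p.1 p.2.1 p.2.2) - f p.1) := by
          rw [h3 (fun p => W p.1 p.2.1 p.2.2 * f p.1
            * (f (Function.update p.1 p.2.1 p.2.2) - f p.1))]
      _ = -(1/2) * ∑ p ∈ AF, W p.1 p.2.1 p.2.2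
            * (f (Function.update p.1 p.2.1 p.2.2) - f p.1) ^ 2 := e4
      _ = -(1/2) * ∑ x ∈ hSfin.toFinset, ∑ i : Fin k,
            ∑ y ∈ hDfin.toFinset.filter (fun y => dist (x i) y = ε),
              W x i y * (f (Function.update x i y) - f x) ^ 2 := by
          rw [h3 (fun p => W p.1 p.2.1 p.2.2
            * (f (Function.update p.1 p.2.1 p.2.2) - f p.1) ^ 2)]
  -- the inclusion form
  have eincl : inclForm Ω ε ω k f
      = ε ^ (k * d) * ε ^ (-2 : ℝ) * (1/2) * ∑ x ∈ hSfin.toFinset, ∑ i : Fin k,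
          ∑ y ∈ hDfin.toFinset.filter (fun y => dist (x i) y = ε),
            wWeight ω k x * (ω y + ((Finset.univ.filter fun j => j ≠ i ∧ x j = y).card : ℝ))
              * (f (Function.update x i y) - f x) ^ 2 := by
    have hsym : ∀ (x : Fin k → EuclideanSpace ℝ (Fin d)) (i : Fin k)
        (y : EuclideanSpace ℝ (Fin d)),
        x ∈ tupleSet Ω ε k → y ∈ discDomain Ω ε → dist (x i) y = ε →
          wWeight ω k (Function.update x i y)
            * (ω (x i) + ((Finset.univ.filter fun j =>
                j ≠ i ∧ Function.update x i y j = x i).card : ℝ))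
          = wWeight ω k x
            * (ω y + ((Finset.univ.filter fun j => j ≠ i ∧ x j = y).card : ℝ)) := by
      intro x i y _ _ _
      have hfc : (Finset.univ.filter fun j => j ≠ i ∧ Function.update x i y j = x i)
          = (Finset.univ.filter fun j => j ≠ i ∧ x j = x i) := by
        ext j
        simp only [Finset.mem_filter, Finset.mem_univ, true_and]
        by_cases hj : j = i
        · subst hj; simp
        · rw [Function.update_of_ne hj]
      rw [hfc]
      unfold wWeight
      convert aux_detailed_balance ω x i y
    have hmain : ∑ x ∈ hSfin.toFinset, ∑ i : Fin k,
          ∑ y ∈ hDfin.toFinset.filter (fun y => dist (x i) y = ε),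
            wWeight ω k x * (ω y + ((Finset.univ.filter fun j => j ≠ i ∧ x j = y).card : ℝ))
              * f x * (f (Function.update x i y) - f x)
        = -(1/2) * ∑ x ∈ hSfin.toFinset, ∑ i : Fin k,
            ∑ y ∈ hDfin.toFinset.filter (fun y => dist (x i) y = ε),
              wWeight ω k x * (ω y + ((Finset.univ.filter fun j => j ≠ i ∧ x j = y).card : ℝ))
                * (f (Function.update x i y) - f x) ^ 2 :=
      main (fun x i y => wWeight ω k x
        * (ω y + ((Finset.univ.filter fun j => j ≠ i ∧ x j = y).card : ℝ))) hsym
    have hA : ∀ x : Fin k → EuclideanSpace ℝ (Fin d), inclGen Ω ε ω k f x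
        = ε ^ (-2 : ℝ) * ∑ i : Fin k,
            ∑ y ∈ hDfin.toFinset.filter (fun y => dist (x i) y = ε),
              (ω y + ((Finset.univ.filter fun j => j ≠ i ∧ x j = y).card : ℝ))
                * (f (Function.update x i y) - f x) := by
      intro x
      unfold inclGen
      congr 1
      refine Finset.sum_congr rfl fun i _ => ?_
      rw [hset (x i), finsum_mem_coe_finset]
    have e2 : ∀ x ∈ hSfin.toFinset, wWeight ω k x * f x * (- inclGen Ω ε ω k f x)
        = -(ε ^ (-2 : ℝ) * ∑ i : Fin k,
            ∑ y ∈ hDfin.toFinset.filter (fun y => dist (x i) y = ε),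
              wWeight ω k x * (ω y + ((Finset.univ.filter fun j => j ≠ i ∧ x j = y).card : ℝ))
                * f x * (f (Function.update x i y) - f x)) := by
      intro x _
      rw [hA x]
      have hpull : ∑ i : Fin k,
          ∑ y ∈ hDfin.toFinset.filter (fun y => dist (x i) y = ε),
            wWeight ω k x * (ω y + ((Finset.univ.filter fun j => j ≠ i ∧ x j = y).card : ℝ))
              * f x * (f (Function.update x i y) - f x)
          = wWeight ω k x * f x * ∑ i : Fin k,
              ∑ y ∈ hDfin.toFinset.filter (fun y => dist (x i) y = ε),
                (ω y + ((Finset.univ.filter fun j => j ≠ i ∧ x j = y).card : ℝ))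
                  * (f (Function.update x i y) - f x) := by
        rw [Finset.mul_sum]
        refine Finset.sum_congr rfl fun i _ => ?_
        rw [Finset.mul_sum]
        exact Finset.sum_congr rfl fun y _ => by ring
      rw [hpull]
      ring
    unfold inclForm
    rw [finsum_mem_eq_finite_toFinset_sum _ hSfin]
    rw [Finset.sum_congr rfl e2]
    rw [Finset.sum_neg_distrib]
    rw [← Finset.mul_sum]
    rw [hmain]
    ring
  -- the independent form
  have eind : indepForm Ω ε ω k f
      = ε ^ (k * d) * ε ^ (-2 : ℝ) * (1/2) * ∑ x ∈ hSfin.toFinset, ∑ i : Fin k,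
          ∑ y ∈ hDfin.toFinset.filter (fun y => dist (x i) y = ε),
            (∏ j : Fin k, ω (x j)) * ω y * (f (Function.update x i y) - f x) ^ 2 := by
    have hsym : ∀ (x : Fin k → EuclideanSpace ℝ (Fin d)) (i : Fin k)
        (y : EuclideanSpace ℝ (Fin d)),
        x ∈ tupleSet Ω ε k → y ∈ discDomain Ω ε → dist (x i) y = ε →
          (∏ j : Fin k, ω (Function.update x i y j)) * ω (x i)
            = (∏ j : Fin k, ω (x j)) * ω y := by
      intro x i y _ _ _
      have hL : (∏ j : Fin k, ω (Function.update x i y j))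
          = ω y * ∏ j ∈ Finset.univ.erase i, ω (x j) := by
        rw [← Finset.mul_prod_erase Finset.univ _ (Finset.mem_univ i), Function.update_self]
        congr 1
        exact Finset.prod_congr rfl fun j hj => by
          rw [Function.update_of_ne (Finset.mem_erase.mp hj).1]
      have hRR : (∏ j : Fin k, ω (x j))
          = ω (x i) * ∏ j ∈ Finset.univ.erase i, ω (x j) :=
        (Finset.mul_prod_erase Finset.univ _ (Finset.mem_univ i)).symm
      rw [hL, hRR]
      ring
    have hmain : ∑ x ∈ hSfin.toFinset, ∑ i : Fin k,
          ∑ y ∈ hDfin.toFinset.filter (fun y => dist (x i) y = ε),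
            (∏ j : Fin k, ω (x j)) * ω y * f x * (f (Function.update x i y) - f x)
        = -(1/2) * ∑ x ∈ hSfin.toFinset, ∑ i : Fin k,
            ∑ y ∈ hDfin.toFinset.filter (fun y => dist (x i) y = ε),
              (∏ j : Fin k, ω (x j)) * ω y * (f (Function.update x i y) - f x) ^ 2 :=
      main (fun x i y => (∏ j : Fin k, ω (x j)) * ω y) hsym
    have hA : ∀ x : Fin k → EuclideanSpace ℝ (Fin d), indepGen Ω ε ω k f x
        = ε ^ (-2 : ℝ) * ∑ i : Fin k,
            ∑ y ∈ hDfin.toFinset.filter (fun y => dist (x i) y = ε),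
              ω y * (f (Function.update x i y) - f x) := by
      intro x
      unfold indepGen
      congr 1
      refine Finset.sum_congr rfl fun i _ => ?_
      rw [hset (x i), finsum_mem_coe_finset]
    have e2 : ∀ x ∈ hSfin.toFinset, (∏ j : Fin k, ω (x j)) * f x * (- indepGen Ω ε ω k f x)
        = -(ε ^ (-2 : ℝ) * ∑ i : Fin k,
            ∑ y ∈ hDfin.toFinset.filter (fun y => dist (x i) y = ε),
              (∏ j : Fin k, ω (x j)) * ω y * f x * (f (Function.update x i y) - f x)) := by
      intro x _
      rw [hA x]
      have hpull : ∑ i : Fin k,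
          ∑ y ∈ hDfin.toFinset.filter (fun y => dist (x i) y = ε),
            (∏ j : Fin k, ω (x j)) * ω y * f x * (f (Function.update x i y) - f x)
          = (∏ j : Fin k, ω (x j)) * f x * ∑ i : Fin k,
              ∑ y ∈ hDfin.toFinset.filter (fun y => dist (x i) y = ε),
                ω y * (f (Function.update x i y) - f x) := by
        rw [Finset.mul_sum]
        refine Finset.sum_congr rfl fun i _ => ?_
        rw [Finset.mul_sum]
        exact Finset.sum_congr rfl fun y _ => by ring
      rw [hpull]
      ring
    unfold indepForm
    rw [finsum_mem_eq_finite_toFinset_sum _ hSfin]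
    rw [Finset.sum_congr rfl e2]
    rw [Finset.sum_neg_distrib]
    rw [← Finset.mul_sum]
    rw [hmain]
    ring
  rw [eincl, eind]
  have hK : 0 ≤ ε ^ (k * d) * ε ^ (-2 : ℝ) * (1/2) :=
    mul_nonneg (mul_nonneg (pow_nonneg hε0.le _) (Real.rpow_nonneg hε0.le _)) (by norm_num)
  refine mul_le_mul_of_nonneg_left ?_ hK
  refine Finset.sum_le_sum fun x hx => ?_
  refine Finset.sum_le_sum fun i _ => ?_
  refine Finset.sum_le_sum fun y hy => ?_
  have hxT : x ∈ tupleSet Ω ε k := hSfin.mem_toFinset.mp hx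
  have hyD : y ∈ discDomain Ω ε := hDfin.mem_toFinset.mp (Finset.mem_filter.mp hy).1
  have hωy : 0 < ω y := hω y hyD
  have hprod_le : (∏ j : Fin k, ω (x j)) ≤ wWeight ω k x := by
    unfold wWeight
    refine Finset.prod_le_prod (fun j _ => (hω (x j) (hxT j)).le) (fun j _ => ?_)
    exact le_add_of_nonneg_right (by positivity)
  have hw_nonneg : 0 ≤ wWeight ω k x := by
    unfold wWeight
    refine Finset.prod_nonneg fun j _ => ?_
    have := (hω (x j) (hxT j)).le
    positivity
  refine mul_le_mul_of_nonneg_right ?_ (sq_nonneg _)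
  refine mul_le_mul hprod_le (le_add_of_nonneg_right (by positivity)) hωy.le hw_nonneg


end
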